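/- With L = [[0, I], [−A, 0]] (A symmetric positive definite) and B = [0; I], the matrix e^{sL}BB^Te^{sL^T} equals the 2×2 block matrix with blocks C₁₁(s) = A^{−1}sin²(sA^{1/2}), C₁₂(s) = C₂₁(s) = A^{−1/2}cos(sA^{1/2})sin(sA^{1/2}), C₂₂(s) = cos²(sA^{1/2}). -/

import Mathlib

open scoped Matrix

variable {n : ℕ}

/-- Matrix cosine, defined by its power series. -/
noncomputable def mcos (M : Matrix (Fin n) (Fin n) ℝ) : Matrix (Fin n) (Fin n) ℝ :=
  ∑' k : ℕ, ((-1 : ℝ) ^ k / (Nat.factorial (2 * k) : ℝ)) • M ^ (2 * k)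

/-- Matrix sine, defined by its power series. -/
noncomputable def msin (M : Matrix (Fin n) (Fin n) ℝ) : Matrix (Fin n) (Fin n) ℝ :=
  ∑' k : ℕ, ((-1 : ℝ) ^ k / (Nat.factorial (2 * k + 1) : ℝ)) • M ^ (2 * k + 1)

private lemma expSummable {N : Type*} [Fintype N] [DecidableEq N] (M : Matrix N N ℝ) :
    Summable fun k : ℕ => ((k.factorial : ℝ))⁻¹ • M ^ k := by
  letI : SeminormedRing (Matrix N N ℝ) := Matrix.linftyOpSemiNormedRing
  letI : NormedRing (Matrix N N ℝ) := Matrix.linftyOpNormedRing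
  letI : NormedAlgebra ℝ (Matrix N N ℝ) := Matrix.linftyOpNormedAlgebra
  exact NormedSpace.expSeries_summable' M

private lemma commute_tsum {N : Type*} [Fintype N] {X : Matrix N N ℝ} {f : ℕ → Matrix N N ℝ}
    (hf : Summable f) (h : ∀ k, Commute X (f k)) : Commute X (∑' k, f k) := by
  have h1 : HasSum (fun k => X * f k) (X * ∑' k, f k) :=
    hf.hasSum.map (AddMonoidHom.mulLeft X) (continuous_const.matrix_mul continuous_id)
  have h2 : HasSum (fun k => f k * X) ((∑' k, f k) * X) :=
    hf.hasSum.map (AddMonoidHom.mulRight X) (continuous_id.matrix_mul continuous_const)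
  have h3 : (fun k => X * f k) = fun k => f k * X := funext fun k => h k
  exact (h3 ▸ h1).unique h2

private lemma tsum_mul_left_mat {N : Type*} [Fintype N] (X : Matrix N N ℝ)
    {f : ℕ → Matrix N N ℝ} (hf : Summable f) : ∑' k, X * f k = X * ∑' k, f k :=
  (hf.hasSum.map (AddMonoidHom.mulLeft X) (continuous_const.matrix_mul continuous_id)).tsum_eq

/-- For `L = [[0, I], [-A, 0]]`, `B = [0; I]`, and `S = A^{1/2}`,
`e^{sL} B Bᵀ e^{sLᵀ}` has blocks `C₁₁ = A⁻¹ sin²(sS)`, `C₁₂ = C₂₁ = S⁻¹ cos(sS) sin(sS)`,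
`C₂₂ = cos²(sS)`. -/
theorem exp_BBt_exp_blocks (A S : Matrix (Fin n) (Fin n) ℝ)
    (hA : A.PosDef) (hS : S.PosDef) (hS2 : S ^ 2 = A) (s : ℝ) :
    let L : Matrix (Fin n ⊕ Fin n) (Fin n ⊕ Fin n) ℝ :=
      Matrix.fromBlocks 0 1 (-A) 0
    let B : Matrix (Fin n ⊕ Fin n) (Fin n) ℝ := Matrix.fromRows 0 1
    NormedSpace.exp (s • L) * B * Bᵀ * (NormedSpace.exp (s • L))ᵀ =
      Matrix.fromBlocks
        (A⁻¹ * msin (s • S) ^ 2)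
        (S⁻¹ * (mcos (s • S) * msin (s • S)))
        (S⁻¹ * (mcos (s • S) * msin (s • S)))
        (mcos (s • S) ^ 2) := by
  intro L B
  classical
  set D : Matrix (Fin n) (Fin n) ℝ := (-(s ^ 2)) • A with hD
  -- powers of s • L
  have hL2 : (s • L) ^ 2 = Matrix.fromBlocks D 0 0 D := by
    have hLL : L * L = Matrix.fromBlocks (-A) 0 0 (-A) := by
      rw [show L = Matrix.fromBlocks 0 1 (-A) 0 from rfl, Matrix.fromBlocks_multiply]
      simp
    rw [sq, Matrix.smul_mul, Matrix.mul_smul, smul_smul, hLL, Matrix.fromBlocks_smul]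
    simp [hD, smul_neg, ← neg_smul, smul_smul, sq]
  have hpow_even : ∀ k : ℕ, (s • L) ^ (2 * k) = Matrix.fromBlocks (D ^ k) 0 0 (D ^ k) := by
    intro k
    induction k with
    | zero => simp [Matrix.fromBlocks_one]
    | succ k ih =>
      have : 2 * (k + 1) = 2 * k + 2 := by ring
      rw [this, pow_add, ih, hL2, Matrix.fromBlocks_multiply]
      simp [pow_succ]
  have hpow_odd : ∀ k : ℕ,
      (s • L) ^ (2 * k + 1) =
        Matrix.fromBlocks 0 (s • D ^ k) (-(s • (D ^ k * A))) 0 := by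
    intro k
    rw [pow_add, pow_one, hpow_even k, show L = Matrix.fromBlocks 0 1 (-A) 0 from rfl,
      Matrix.fromBlocks_smul, Matrix.fromBlocks_multiply]
    simp [Matrix.mul_smul, mul_neg]
  -- the exponential series
  set f : ℕ → Matrix (Fin n ⊕ Fin n) (Fin n ⊕ Fin n) ℝ :=
    fun k => ((k.factorial : ℝ))⁻¹ • (s • L) ^ k with hf
  have hexp : NormedSpace.exp (s • L) = ∑' k, f k := by
    rw [NormedSpace.exp_eq_tsum (𝕂 := ℝ)]
  have hsum : Summable f := expSummable _
  have he : Summable fun k => f (2 * k) :=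
    hsum.comp_injective (fun a b hab => by omega)
  have ho : Summable fun k => f (2 * k + 1) :=
    hsum.comp_injective (fun a b hab => by omega)
  set a : ℕ → Matrix (Fin n) (Fin n) ℝ :=
    fun k => (((2 * k).factorial : ℝ))⁻¹ • D ^ k with ha
  set b : ℕ → Matrix (Fin n) (Fin n) ℝ :=
    fun k => (((2 * k + 1).factorial : ℝ))⁻¹ • (s • D ^ k) with hb
  have hfe : (fun k => f (2 * k)) = fun k => Matrix.fromBlocks (a k) 0 0 (a k) := by
    funext k
    simp only [hf, ha, hpow_even k, Matrix.fromBlocks_smul, smul_zero]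
  have hfo : (fun k => f (2 * k + 1)) =
      fun k => Matrix.fromBlocks 0 (b k) (-(A * b k)) 0 := by
    funext k
    have hcomm : A * D ^ k = D ^ k * A :=
      (((Commute.refl A).smul_right _).pow_right k : Commute A (D ^ k))
    simp only [hf, hb, hpow_odd k, Matrix.fromBlocks_smul, smul_zero, smul_neg,
      Matrix.mul_smul, hcomm, smul_smul]
  -- block-embedding homs
  have hφcont : Continuous fun X : Matrix (Fin n) (Fin n) ℝ =>
      Matrix.fromBlocks X 0 0 X :=
    Continuous.matrix_fromBlocks continuous_id continuous_const continuous_const continuous_id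
  have hψcont : Continuous fun X : Matrix (Fin n) (Fin n) ℝ =>
      Matrix.fromBlocks 0 X (-(A * X)) 0 :=
    Continuous.matrix_fromBlocks continuous_const continuous_id
      ((continuous_const.matrix_mul continuous_id).neg) continuous_const
  have h11cont : Continuous fun M : Matrix (Fin n ⊕ Fin n) (Fin n ⊕ Fin n) ℝ =>
      M.toBlocks₁₁ := continuous_matrix fun i j => continuous_id.matrix_elem _ _
  have h12cont : Continuous fun M : Matrix (Fin n ⊕ Fin n) (Fin n ⊕ Fin n) ℝ =>
      M.toBlocks₁₂ := continuous_matrix fun i j => continuous_id.matrix_elem _ _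
  let φ : Matrix (Fin n) (Fin n) ℝ →+ Matrix (Fin n ⊕ Fin n) (Fin n ⊕ Fin n) ℝ :=
    AddMonoidHom.mk' (fun X => Matrix.fromBlocks X 0 0 X)
      (fun X Y => by rw [Matrix.fromBlocks_add]; simp)
  let ψ : Matrix (Fin n) (Fin n) ℝ →+ Matrix (Fin n ⊕ Fin n) (Fin n ⊕ Fin n) ℝ :=
    AddMonoidHom.mk' (fun X => Matrix.fromBlocks 0 X (-(A * X)) 0)
      (fun X Y => by rw [Matrix.fromBlocks_add]; simp [mul_add, add_comm])
  let π₁₁ : Matrix (Fin n ⊕ Fin n) (Fin n ⊕ Fin n) ℝ →+ Matrix (Fin n) (Fin n) ℝ :=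
    AddMonoidHom.mk' Matrix.toBlocks₁₁ (fun X Y => rfl)
  let π₁₂ : Matrix (Fin n ⊕ Fin n) (Fin n ⊕ Fin n) ℝ →+ Matrix (Fin n) (Fin n) ℝ :=
    AddMonoidHom.mk' Matrix.toBlocks₁₂ (fun X Y => rfl)
  have hsa : Summable a := by
    have := (hfe ▸ he).map π₁₁ h11cont
    exact this
  have hsb : Summable b := by
    have := (hfo ▸ ho).map π₁₂ h12cont
    exact this
  have hEven : ∑' k, f (2 * k) =
      Matrix.fromBlocks (∑' k, a k) 0 0 (∑' k, a k) := by
    rw [hfe]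
    exact (hsa.hasSum.map φ hφcont).tsum_eq
  have hOdd : ∑' k, f (2 * k + 1) =
      Matrix.fromBlocks 0 (∑' k, b k) (-(A * ∑' k, b k)) 0 := by
    rw [hfo]
    exact (hsb.hasSum.map ψ hψcont).tsum_eq
  set ca : Matrix (Fin n) (Fin n) ℝ := ∑' k, a k with hca
  set p : Matrix (Fin n) (Fin n) ℝ := ∑' k, b k with hp
  have hexpL : NormedSpace.exp (s • L) =
      Matrix.fromBlocks ca p (-(A * p)) ca := by
    rw [hexp, ← tsum_even_add_odd he ho, hEven, hOdd, Matrix.fromBlocks_add]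
    simp
  -- identification of the blocks
  have hSpow : ∀ k : ℕ, S ^ (2 * k) = A ^ k := fun k => by rw [pow_mul, hS2]
  have hcos : mcos (s • S) = ca := by
    rw [mcos, hca]
    refine tsum_congr fun k => ?_
    simp only [ha]
    rw [smul_pow, hSpow, hD, smul_pow, smul_smul, smul_smul]
    congr 1
    rw [show ((-(s ^ 2)) : ℝ) ^ k = (-1) ^ k * s ^ (2 * k) from by rw [neg_pow, ← pow_mul]]
    ring
  have hsin : msin (s • S) = S * p := by
    rw [msin, hp, ← tsum_mul_left_mat S hsb]
    refine tsum_congr fun k => ?_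
    simp only [hb]
    rw [Matrix.mul_smul, Matrix.mul_smul,
      show S * D ^ k = ((-(s ^ 2)) : ℝ) ^ k • S ^ (2 * k + 1) from by
        rw [hD, smul_pow, Matrix.mul_smul, pow_succ' S (2 * k), hSpow],
      smul_pow, smul_smul, smul_smul, smul_smul]
    congr 1
    rw [show ((-(s ^ 2)) : ℝ) ^ k = (-1) ^ k * s ^ (2 * k) from by rw [neg_pow, ← pow_mul]]
    ring
  -- determinants and inverses
  have hSdet : IsUnit S.det := isUnit_iff_ne_zero.mpr hS.det_pos.ne'
  have hAdet : IsUnit A.det := isUnit_iff_ne_zero.mpr hA.det_pos.ne'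
  have hSiS : S⁻¹ * S = 1 := Matrix.nonsing_inv_mul S hSdet
  have hAiA : A⁻¹ * A = 1 := Matrix.nonsing_inv_mul A hAdet
  -- commutation facts
  have hSA : Commute S A := hS2 ▸ (Commute.refl S).pow_right 2
  have hSb : ∀ k, Commute S (b k) :=
    fun k => (((hSA.smul_right _).pow_right k).smul_right _).smul_right _
  have hSp : Commute S p := commute_tsum hsb hSb
  have hSca : Commute S ca :=
    commute_tsum hsa fun k => ((hSA.smul_right _).pow_right k).smul_right _
  have hbk_a : ∀ k j, Commute (b k) (a j) := by
    intro k j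
    have : Commute (D ^ k) (D ^ j) := (Commute.refl D).pow_pow k j
    exact ((this.smul_left _).smul_left _).smul_right _
  have hcap : Commute ca p := by
    refine commute_tsum hsb fun k => ?_
    exact (commute_tsum hsa fun j => hbk_a k j).symm
  -- symmetry
  have hAt : Aᵀ = A := by
    have h := hA.isHermitian
    ext i j
    exact congrFun (congrFun h i) j
  have hDt : Dᵀ = D := by rw [hD, Matrix.transpose_smul, hAt]
  have hpt : pᵀ = p := by
    rw [hp, Matrix.transpose_tsum]
    refine tsum_congr fun k => ?_
    rw [hb, Matrix.transpose_smul, Matrix.transpose_smul, Matrix.transpose_pow, hDt]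
  have hcat : caᵀ = ca := by
    rw [hca, Matrix.transpose_tsum]
    refine tsum_congr fun k => ?_
    rw [ha, Matrix.transpose_smul, Matrix.transpose_pow, hDt]
  -- assemble
  have hB : B = Matrix.fromRows 0 1 := rfl
  rw [hexpL, hB, Matrix.transpose_fromRows, Matrix.transpose_zero, Matrix.transpose_one,
    Matrix.fromBlocks_mul_fromRows, Matrix.fromRows_mul_fromCols,
    Matrix.fromBlocks_transpose, hpt, hcat, Matrix.fromBlocks_multiply]
  simp only [Matrix.mul_zero, Matrix.zero_mul, Matrix.mul_one, zero_add, add_zero,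
    Matrix.zero_mul]
  have hSS : S * S = A := by rw [← hS2, sq]
  have h11 : A⁻¹ * msin (s • S) ^ 2 = p * p := by
    rw [hsin, sq]
    have : S * p * (S * p) = A * (p * p) := by
      rw [mul_assoc S p (S * p), ← mul_assoc p S p, ← hSp.eq, ← mul_assoc,
        ← mul_assoc, hSS, mul_assoc]
    rw [this, ← mul_assoc, hAiA, one_mul]
  have h12 : S⁻¹ * (mcos (s • S) * msin (s • S)) = ca * p := by
    rw [hcos, hsin, ← mul_assoc ca S p, ← hSca.eq, mul_assoc S ca p, ← mul_assoc,
      hSiS, one_mul]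
  rw [h11, h12, sq, hcos, ← hcap.eq]
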